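/- For W ∈ S(Γ), if □γ ∈ FL±(Γ) and □γ is consistent, then □γ ∈ W if and only if for every W' ∈ S(Γ) with W ∧ ◇W' consistent, γ ∈ W'. -/
import Mathlib


namespace PEDAL

mutual
inductive Form : Type where
  | atom : ℕ → Form
  | bot  : Form
  | neg  : Form → Form
  | or   : Form → Form → Form
  | dia  : Prog → Form → Form
  | nec  : Form → Form
deriving DecidableEq
inductive Prog : Type where
  | atom : ℕ → Prog
  | seq  : Prog → Prog → Prog
  | choice : Prog → Prog → Prog
  | star : Prog → Prog
  | test : Form → Prog
deriving DecidableEq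
end

def Form.impl (A B : Form) : Form := Form.or (Form.neg A) B
def Form.and (A B : Form) : Form := Form.neg (Form.or (Form.neg A) (Form.neg B))
def Form.iff (A B : Form) : Form := (A.impl B).and (B.impl A)
def Form.box (π : Prog) (A : Form) : Form := Form.neg (Form.dia π (Form.neg A))
def Form.diam (A : Form) : Form := Form.neg (Form.nec (Form.neg A))
def Form.top : Form := Form.neg Form.bot

/-- Boolean evaluation treating atoms, diamond- and box-formulas as atoms. -/
def beval (v : Form → Bool) : Form → Bool
  | Form.bot => false
  | Form.neg A => ! beval v A
  | Form.or A B => beval v A || beval v B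
  | A => v A

def Taut (A : Form) : Prop := ∀ v, beval v A = true


structure ModelData (S : Type) where
  vf : ℕ → Set S
  vp : ℕ → S → S → Prop
  Rbox : S → S → Prop

mutual
def Sat {S : Type} (M : ModelData S) (s : S) : Form → Prop
  | Form.atom a => s ∈ M.vf a
  | Form.bot => False
  | Form.neg A => ¬ Sat M s A
  | Form.or A B => Sat M s A ∨ Sat M s B
  | Form.dia π A => ∃ t, Rel M π s t ∧ Sat M t A
  | Form.nec A => ∀ t, M.Rbox s t → Sat M t A
def Rel {S : Type} (M : ModelData S) : Prog → S → S → Prop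
  | Prog.atom p => M.vp p
  | Prog.seq π₁ π₂ => fun s u => ∃ t, Rel M π₁ s t ∧ Rel M π₂ t u
  | Prog.choice π₁ π₂ => fun s t => Rel M π₁ s t ∨ Rel M π₂ s t
  | Prog.star π => Relation.ReflTransGen (Rel M π)
  | Prog.test A => fun s t => s = t ∧ Sat M s A
end
/-- The Hilbert system for PDL. -/
inductive PDLProv : Form → Prop where
  | taut {A : Form} : Taut A → PDLProv A
  | k {π : Prog} {A B : Form} : PDLProv ((Form.box π (A.impl B)).impl ((Form.box π A).impl (Form.box π B)))
  | boxAnd {π : Prog} {A B : Form} : PDLProv ((Form.box π (A.and B)).iff ((Form.box π A).and (Form.box π B)))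
  | choice {π₁ π₂ : Prog} {A : Form} : PDLProv ((Form.box (Prog.choice π₁ π₂) A).iff ((Form.box π₁ A).and (Form.box π₂ A)))
  | test {A B : Form} : PDLProv ((Form.box (Prog.test A) B).iff (A.impl B))
  | seq {π₁ π₂ : Prog} {A : Form} : PDLProv ((Form.box (Prog.seq π₁ π₂) A).iff (Form.box π₁ (Form.box π₂ A)))
  | fixpoint {π : Prog} {A : Form} : PDLProv ((A.and (Form.box π (Form.box (Prog.star π) A))).iff (Form.box (Prog.star π) A))
  | ind {π : Prog} {A : Form} : PDLProv ((A.and (Form.box (Prog.star π) (A.impl (Form.box π A)))).impl (Form.box (Prog.star π) A))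
  | mp {A B : Form} : PDLProv (A.impl B) → PDLProv A → PDLProv B
  | nec {π : Prog} {A : Form} : PDLProv A → PDLProv (Form.box π A)

/-- The Hilbert system for PDL□ : PDL plus an S5 universal modality. -/
inductive PDLBoxProv : Form → Prop where
  | taut {A : Form} : Taut A → PDLBoxProv A
  | k {π : Prog} {A B : Form} : PDLBoxProv ((Form.box π (A.impl B)).impl ((Form.box π A).impl (Form.box π B)))
  | boxAnd {π : Prog} {A B : Form} : PDLBoxProv ((Form.box π (A.and B)).iff ((Form.box π A).and (Form.box π B)))
  | choice {π₁ π₂ : Prog} {A : Form} : PDLBoxProv ((Form.box (Prog.choice π₁ π₂) A).iff ((Form.box π₁ A).and (Form.box π₂ A)))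
  | test {A B : Form} : PDLBoxProv ((Form.box (Prog.test A) B).iff (A.impl B))
  | seq {π₁ π₂ : Prog} {A : Form} : PDLBoxProv ((Form.box (Prog.seq π₁ π₂) A).iff (Form.box π₁ (Form.box π₂ A)))
  | fixpoint {π : Prog} {A : Form} : PDLBoxProv ((A.and (Form.box π (Form.box (Prog.star π) A))).iff (Form.box (Prog.star π) A))
  | ind {π : Prog} {A : Form} : PDLBoxProv ((A.and (Form.box (Prog.star π) (A.impl (Form.box π A)))).impl (Form.box (Prog.star π) A))
  | kbox {A B : Form} : PDLBoxProv ((Form.nec (A.impl B)).impl ((Form.nec A).impl (Form.nec B)))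
  | t {A : Form} : PDLBoxProv ((Form.nec A).impl A)
  | five {A : Form} : PDLBoxProv ((Form.diam A).impl (Form.nec (Form.diam A)))
  | diaBox {π : Prog} {A : Form} : PDLBoxProv ((Form.dia π A).impl (Form.diam A))
  | mp {A B : Form} : PDLBoxProv (A.impl B) → PDLBoxProv A → PDLBoxProv B
  | nec {π : Prog} {A : Form} : PDLBoxProv A → PDLBoxProv (Form.box π A)
  | necBox {A : Form} : PDLBoxProv A → PDLBoxProv (Form.nec A)

/-- A formula is consistent (w.r.t. PDL□). -/
def Consistent (A : Form) : Prop := ¬ PDLBoxProv (A.impl Form.bot)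

/-- A PDL□-model: `Rbox` is an equivalence relation containing every atomic program relation. -/
def ModelData.IsPDLBox {S : Type} (M : ModelData S) : Prop :=
  Equivalence M.Rbox ∧ ∀ p s t, M.vp p s t → M.Rbox s t

/-- The Fischer–Ladner closure of a set of formulas. -/
inductive FL (Γ : Set Form) : Form → Prop where
  | base {γ : Form} : γ ∈ Γ → FL Γ γ
  | neg {γ : Form} : FL Γ (Form.neg γ) → FL Γ γ
  | orl {γ₁ γ₂ : Form} : FL Γ (Form.or γ₁ γ₂) → FL Γ γ₁
  | orr {γ₁ γ₂ : Form} : FL Γ (Form.or γ₁ γ₂) → FL Γ γ₂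
  | dia {π : Prog} {γ : Form} : FL Γ (Form.dia π γ) → FL Γ γ
  | nec {γ : Form} : FL Γ (Form.nec γ) → FL Γ γ
  | test {γ₁ γ₂ : Form} : FL Γ (Form.dia (Prog.test γ₁) γ₂) → FL Γ γ₁
  | seq {π₁ π₂ : Prog} {γ : Form} : FL Γ (Form.dia (Prog.seq π₁ π₂) γ) → FL Γ (Form.dia π₁ (Form.dia π₂ γ))
  | choicel {π₁ π₂ : Prog} {γ : Form} : FL Γ (Form.dia (Prog.choice π₁ π₂) γ) → FL Γ (Form.dia π₁ γ)
  | choicer {π₁ π₂ : Prog} {γ : Form} : FL Γ (Form.dia (Prog.choice π₁ π₂) γ) → FL Γ (Form.dia π₂ γ)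
  | star1 {π : Prog} {γ : Form} : FL Γ (Form.dia (Prog.star π) γ) → FL Γ (Form.dia π γ)
  | star2 {π : Prog} {γ : Form} : FL Γ (Form.dia (Prog.star π) γ) → FL Γ (Form.dia π (Form.dia (Prog.star π) γ))

/-- FL±(Γ) : the Fischer–Ladner closure together with negations of its members. -/
def FLpm (Γ : Set Form) : Set Form := {γ | FL Γ γ} ∪ {γ | ∃ δ, FL Γ δ ∧ γ = Form.neg δ}

/-- Conjunction of a finite set of formulas. -/
noncomputable def conj (W : Finset Form) : Form := W.toList.foldr Form.and Form.top
/-- Disjunction of a finite set of formulas. -/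
noncomputable def disj (W : Finset Form) : Form := W.toList.foldr Form.or Form.bot

/-- S(Γ): maximal consistent subsets of FL±(Γ). -/
def SStates (Γ : Set Form) : Set (Finset Form) :=
  {W | ↑W ⊆ FLpm Γ ∧ Consistent (conj W) ∧
    ∀ γ ∈ FLpm Γ, γ ∉ W → ¬ Consistent (conj (insert γ W))}

def CanState (Γ : Set Form) : Type := {W : Finset Form // W ∈ SStates Γ}

/-- The canonical PDL□-model. -/
noncomputable def canModel (Γ : Set Form) : ModelData (CanState Γ) where
  vf a := {W | Form.atom a ∈ W.1}
  vp p W₁ W₂ := Consistent ((conj W₁.1).and (Form.dia (Prog.atom p) (conj W₂.1)))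
  Rbox W₁ W₂ := Consistent ((conj W₁.1).and (Form.diam (conj W₂.1)))
/-- A formula is dynamic-modal free (dmff): it contains no `⟨π⟩`. -/
def DMFree : Form → Prop
  | Form.atom _ => True
  | Form.bot => True
  | Form.neg A => DMFree A
  | Form.or A B => DMFree A ∧ DMFree B
  | Form.dia _ _ => False
  | Form.nec A => DMFree A

/-- Program valuations on a state space `S`. -/
def Valu (S : Type) : Type := ℕ → S → S → Prop

/-- A valuation is compatible with `R` when every atomic program relation is contained in `R`. -/
def ValCompat {S : Type} (R : S → S → Prop) (v : Valu S) : Prop := ∀ p s t, v p s t → R s t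

/-- A PEDAL-model. -/
structure PModel (S : Type) where
  vf : ℕ → Set S
  Rbox : S → S → Prop
  equiv : Equivalence Rbox
  Part : Set (Set (Valu S))
  mu : Set (Valu S) → ℝ
  part_finite : Part.Finite
  part_val : ∀ P ∈ Part, ∀ v ∈ P, ValCompat Rbox v
  part_disj : ∀ P ∈ Part, ∀ Q ∈ Part, P ≠ Q → Disjoint P Q
  part_cover : ∀ v : Valu S, ValCompat Rbox v → ∃ P ∈ Part, v ∈ P
  mu_nonneg : ∀ P ∈ Part, 0 ≤ mu P
  mu_sum : ∑ᶠ P ∈ Part, mu P = 1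
  mu_supp : ∀ P ∈ Part, mu P ≠ 0 → P.Finite

/-- The PDL□-model `M(v)` obtained from a PEDAL-model by fixing a program valuation. -/
def PModel.toModel {S : Type} (M : PModel S) (v : Valu S) : ModelData S :=
  ⟨M.vf, v, M.Rbox⟩

/-- The measure on sets of valuations induced by spreading each cell's probability uniformly. -/
noncomputable def PModel.meas {S : Type} (M : PModel S) (X : Set (Valu S)) : ℝ :=
  ∑ᶠ P ∈ M.Part, M.mu P * (((P ∩ X).ncard : ℝ) / (P.ncard : ℝ))

/-- The set of (compatible) valuations making `γ` true at `s`, i.e. `Val^S_p(s,γ)`. -/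
def PModel.valSet {S : Type} (M : PModel S) (s : S) (γ : Form) : Set (Valu S) :=
  {v | ValCompat M.Rbox v ∧ Sat (M.toModel v) s γ}

/-- μ(s, γ): the induced probability of the ground formula γ at state s. -/
noncomputable def PModel.pr {S : Type} (M : PModel S) (s : S) (γ : Form) : ℝ :=
  M.meas (M.valSet s γ)

/-- The probabilistic language L₁. -/
inductive PForm : Type where
  | ge : Form → ℚ → PForm
  | neg : PForm → PForm
  | or : PForm → PForm → PForm
deriving DecidableEq

def PForm.impl (A B : PForm) : PForm := PForm.or (PForm.neg A) B
def PForm.and (A B : PForm) : PForm := PForm.neg (PForm.or (PForm.neg A) (PForm.neg B))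
def PForm.iff (A B : PForm) : PForm := (A.impl B).and (B.impl A)
/-- Pr(γ) < q := ¬ Pr(γ) ≥ q -/
def PForm.lt (γ : Form) (q : ℚ) : PForm := PForm.neg (PForm.ge γ q)
/-- Pr(γ) ≤ q := Pr(¬γ) ≥ 1 − q -/
def PForm.le (γ : Form) (q : ℚ) : PForm := PForm.ge (Form.neg γ) (1 - q)
/-- Pr(γ) = q := Pr(γ) ≥ q ∧ Pr(γ) ≤ q -/
def PForm.eq (γ : Form) (q : ℚ) : PForm := (PForm.ge γ q).and (PForm.le γ q)

def pbeval (v : PForm → Bool) : PForm → Bool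
  | PForm.neg A => ! pbeval v A
  | PForm.or A B => pbeval v A || pbeval v B
  | A => v A

def PTaut (A : PForm) : Prop := ∀ v, pbeval v A = true

/-- The PEDAL proof system (with the infinitary Archimedean rule `r3`). -/
inductive PProv : PForm → Prop where
  | taut {A : PForm} : PTaut A → PProv A
  | a2 {γ : Form} : PProv (PForm.ge γ 0)
  | a3 {γ : Form} : DMFree γ → PProv ((PForm.eq γ 1).or (PForm.eq γ 0))
  | a4 {γ : Form} {r₁ r₂ : ℚ} : 0 ≤ r₁ → r₂ ≤ 1 → r₁ < r₂ →
      PProv ((PForm.le γ r₁).impl (PForm.lt γ r₂))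
  | a5 {γ : Form} {r : ℚ} : 0 ≤ r → r ≤ 1 → PProv ((PForm.lt γ r).impl (PForm.le γ r))
  | a6 {γ₁ γ₂ : Form} {r₁ r₂ : ℚ} : 0 ≤ r₁ → r₁ ≤ 1 → 0 ≤ r₂ → r₂ ≤ 1 →
      PProv ((((PForm.ge γ₁ r₁).and (PForm.ge γ₂ r₂)).and (PForm.eq (γ₁.and γ₂) 0)).impl
        (PForm.ge (Form.or γ₁ γ₂) (min 1 (r₁ + r₂))))
  | a7 {γ₁ γ₂ : Form} {r₁ r₂ : ℚ} : 0 ≤ r₁ → 0 ≤ r₂ → r₁ + r₂ ≤ 1 →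
      PProv (((PForm.le γ₁ r₁).and (PForm.lt γ₂ r₂)).impl (PForm.lt (Form.or γ₁ γ₂) (r₁ + r₂)))
  | mp {A B : PForm} : PProv (A.impl B) → PProv A → PProv B
  | r2 {γ : Form} : PDLBoxProv γ → PProv (PForm.eq γ 1)
  | r3 {A : PForm} {γ : Form} {r : ℚ} : 0 < r → r ≤ 1 →
      (∀ k : ℕ, (1 : ℚ) / r ≤ (k : ℚ) → PProv (A.impl (PForm.ge γ (r - 1 / (k : ℚ))))) →
      PProv (A.impl (PForm.ge γ r))

/-- PEDAL semantics. -/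
def PSat {S : Type} (M : PModel S) (s : S) : PForm → Prop
  | PForm.ge γ q => (q : ℝ) ≤ M.pr s γ
  | PForm.neg A => ¬ PSat M s A
  | PForm.or A B => PSat M s A ∨ PSat M s B

/-- Big conjunction of a list of L₁-formulas. -/
def bigAndP : List PForm → PForm
  | [] => PForm.or (PForm.ge Form.bot 0) (PForm.neg (PForm.ge Form.bot 0))
  | [A] => A
  | A :: l => A.and (bigAndP l)

/-- Big disjunction of a list of ground formulas. -/
def bigOrF : List Form → Form
  | [] => Form.bot
  | [A] => A
  | A :: l => Form.or A (bigOrF l)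

/-- Two states are dmff-compatible when they contain exactly the same dmffs. -/
def DmffComp (W V : Finset Form) : Prop := ∀ γ : Form, DMFree γ → (γ ∈ W ↔ γ ∈ V)

/-- The model induced by a section σ of S(X). -/
noncomputable def secModel (X : Set Form) (σ : CanState X → CanState X) :
    ModelData (CanState X) where
  vf a := {W | Form.atom a ∈ W.1}
  vp p W₁ W₂ := Consistent ((conj (σ W₁).1).and (Form.dia (Prog.atom p) (conj (σ W₂).1)))
  Rbox W₁ W₂ := Consistent ((conj W₁.1).and (Form.diam (conj W₂.1)))


/-! ### Auxiliary machinery for stmt5 -/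

section Stmt5Aux

open Form

local notation "⊬" => Consistent

/-- A helper to discharge a tautology by boolean case analysis is done inline. -/

lemma prov_mp2 {A B C : Form} (h : PDLBoxProv (A.impl (B.impl C)))
    (h1 : PDLBoxProv A) (h2 : PDLBoxProv B) : PDLBoxProv C :=
  (h.mp h1).mp h2

lemma prov_trans {A B C : Form} (h1 : PDLBoxProv (A.impl B)) (h2 : PDLBoxProv (B.impl C)) :
    PDLBoxProv (A.impl C) := by
  refine prov_mp2 (PDLBoxProv.taut ?_) h1 h2
  intro v
  cases hA : beval v A <;> cases hB : beval v B <;> cases hC : beval v C <;>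
    simp [Form.impl, beval, hA, hB, hC]

lemma prov_and_left {A B : Form} : PDLBoxProv ((A.and B).impl A) := by
  refine PDLBoxProv.taut ?_
  intro v
  cases hA : beval v A <;> cases hB : beval v B <;>
    simp [Form.impl, Form.and, beval, hA, hB]

lemma prov_and_right {A B : Form} : PDLBoxProv ((A.and B).impl B) := by
  refine PDLBoxProv.taut ?_
  intro v
  cases hA : beval v A <;> cases hB : beval v B <;>
    simp [Form.impl, Form.and, beval, hA, hB]

lemma prov_and_intro {X A B : Form} (h1 : PDLBoxProv (X.impl A)) (h2 : PDLBoxProv (X.impl B)) :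
    PDLBoxProv (X.impl (A.and B)) := by
  refine prov_mp2 (PDLBoxProv.taut ?_) h1 h2
  intro v
  cases hX : beval v X <;> cases hA : beval v A <;> cases hB : beval v B <;>
    simp [Form.impl, Form.and, beval, hX, hA, hB]

lemma prov_contrapose {A B : Form} (h : PDLBoxProv (A.impl B)) :
    PDLBoxProv ((B.neg).impl (A.neg)) := by
  refine (PDLBoxProv.taut ?_).mp h
  intro v
  cases hA : beval v A <;> cases hB : beval v B <;>
    simp [Form.impl, beval, hA, hB]

lemma prov_bot_of_contr {X A : Form} (h1 : PDLBoxProv (X.impl A))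
    (h2 : PDLBoxProv (X.impl A.neg)) : PDLBoxProv (X.impl Form.bot) := by
  refine prov_mp2 (PDLBoxProv.taut ?_) h1 h2
  intro v
  cases hX : beval v X <;> cases hA : beval v A <;>
    simp [Form.impl, beval, hX, hA]

lemma prov_neg_of_and_bot {A C : Form} (h : PDLBoxProv ((A.and C).impl Form.bot)) :
    PDLBoxProv (C.impl A.neg) := by
  refine (PDLBoxProv.taut ?_).mp h
  intro v
  cases hA : beval v A <;> cases hC : beval v C <;>
    simp [Form.impl, Form.and, beval, hA, hC]

lemma consistent_mono {A B : Form} (h : PDLBoxProv (A.impl B)) (hA : Consistent A) :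
    Consistent B := fun hB => hA (prov_trans h hB)

/-! conj lemmas -/

lemma prov_foldr_mem {l : List Form} {δ : Form} (h : δ ∈ l) :
    PDLBoxProv ((l.foldr Form.and Form.top).impl δ) := by
  induction l with
  | nil => cases h
  | cons a l ih =>
    rcases List.mem_cons.mp h with rfl | h
    · exact prov_and_left
    · exact prov_trans prov_and_right (ih h)

lemma prov_conj_mem {W : Finset Form} {δ : Form} (h : δ ∈ W) :
    PDLBoxProv ((conj W).impl δ) :=
  prov_foldr_mem (by simpa using h)

lemma prov_impl_foldr {X : Form} {l : List Form} (h : ∀ δ ∈ l, PDLBoxProv (X.impl δ)) :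
    PDLBoxProv (X.impl (l.foldr Form.and Form.top)) := by
  induction l with
  | nil =>
    refine PDLBoxProv.taut ?_
    intro v
    cases hX : beval v X <;> simp [Form.impl, Form.top, beval, hX]
  | cons a l ih =>
    exact prov_and_intro (h a (by simp)) (ih fun δ hδ => h δ (by simp [hδ]))

lemma prov_impl_conj {X : Form} {W : Finset Form} (h : ∀ δ ∈ W, PDLBoxProv (X.impl δ)) :
    PDLBoxProv (X.impl (conj W)) :=
  prov_impl_foldr fun δ hδ => h δ (by simpa using hδ)

/-- From inconsistency of `insert δ V` we get `conj V → ¬δ`. -/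
lemma prov_refute_of_insert {δ : Form} {V : Finset Form}
    (h : ¬ Consistent (conj (insert δ V))) :
    PDLBoxProv ((conj V).impl δ.neg) := by
  have hP : PDLBoxProv ((conj (insert δ V)).impl Form.bot) := not_not.mp h
  have hin : PDLBoxProv ((δ.and (conj V)).impl (conj (insert δ V))) := by
    refine prov_impl_conj fun ε hε => ?_
    rcases Finset.mem_insert.mp hε with rfl | hε
    · exact prov_and_left
    · exact prov_trans prov_and_right (prov_conj_mem hε)
  exact prov_neg_of_and_bot (prov_trans hin hP)

/-! modal lemmas -/

lemma prov_nec_mono {A B : Form} (h : PDLBoxProv (A.impl B)) :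
    PDLBoxProv ((Form.nec A).impl (Form.nec B)) :=
  PDLBoxProv.kbox.mp (PDLBoxProv.necBox h)

lemma prov_diam_mono {A B : Form} (h : PDLBoxProv (A.impl B)) :
    PDLBoxProv ((Form.diam A).impl (Form.diam B)) :=
  prov_contrapose (prov_nec_mono (prov_contrapose h))

lemma prov_not_diam {A : Form} (h : PDLBoxProv (A.impl Form.bot)) :
    PDLBoxProv ((Form.diam A).impl Form.bot) := by
  have hnA : PDLBoxProv A.neg := by
    refine (PDLBoxProv.taut ?_).mp h
    intro v
    cases hA : beval v A <;> simp [Form.impl, beval, hA]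
  have hb : PDLBoxProv (Form.nec A.neg) := PDLBoxProv.necBox hnA
  refine (PDLBoxProv.taut ?_).mp hb
  intro v
  cases hA : beval v (Form.nec A.neg) <;>
    simp [Form.impl, Form.diam, beval, hA]

lemma prov_imp_under {Y Z₁ Z₂ : Form} (h : PDLBoxProv (Z₁.impl Z₂)) :
    PDLBoxProv ((Y.impl Z₁).impl (Y.impl Z₂)) := by
  refine (PDLBoxProv.taut ?_).mp h
  intro v
  cases hY : beval v Y <;> cases h1 : beval v Z₁ <;> cases h2 : beval v Z₂ <;>
    simp [Form.impl, beval, hY, h1, h2]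

lemma prov_neg_comb {A B C : Form} (h : PDLBoxProv (A.impl (B.impl C))) :
    PDLBoxProv ((C.neg).impl ((A.neg).or (B.neg))) := by
  refine (PDLBoxProv.taut ?_).mp h
  intro v
  cases hA : beval v A <;> cases hB : beval v B <;> cases hC : beval v C <;>
    simp [Form.impl, beval, hA, hB, hC]

/-- box agglomeration: `□X → (□Y → □(X∧Y))`. -/
lemma prov_box_and {X Y : Form} :
    PDLBoxProv ((Form.nec X).impl ((Form.nec Y).impl (Form.nec (X.and Y)))) := by
  have h0 : PDLBoxProv (X.impl (Y.impl (X.and Y))) := by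
    refine PDLBoxProv.taut ?_
    intro v
    cases hX : beval v X <;> cases hY : beval v Y <;>
      simp [Form.impl, Form.and, beval, hX, hY]
  have h1 : PDLBoxProv ((Form.nec X).impl (Form.nec (Y.impl (X.and Y)))) := prov_nec_mono h0
  exact prov_trans h1 PDLBoxProv.kbox

/-- from `⊢ C → D ∨ E` get `⊢ ◇C → ◇D ∨ ◇E`. -/
lemma prov_diam_or {C D E : Form} (h : PDLBoxProv (C.impl (D.or E))) :
    PDLBoxProv ((Form.diam C).impl ((Form.diam D).or (Form.diam E))) := by
  have h1 : PDLBoxProv ((D.neg.and E.neg).impl C.neg) := by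
    refine (PDLBoxProv.taut ?_).mp h
    intro v
    cases hC : beval v C <;> cases hD : beval v D <;> cases hE : beval v E <;>
      simp [Form.impl, Form.and, beval, hC, hD, hE]
  have h2 : PDLBoxProv ((Form.nec (D.neg.and E.neg)).impl (Form.nec C.neg)) := prov_nec_mono h1
  have h3 : PDLBoxProv ((Form.nec D.neg).impl ((Form.nec E.neg).impl (Form.nec (D.neg.and E.neg)))) :=
    prov_box_and
  have h4 : PDLBoxProv ((Form.nec D.neg).impl ((Form.nec E.neg).impl (Form.nec C.neg))) :=
    prov_trans h3 (prov_imp_under h2)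
  exact prov_neg_comb h4

/-! flip -/

/-- The "canonical refuter" of a formula inside FL±. -/
def flipF : Form → Form
  | Form.neg ε => ε
  | δ => Form.neg δ

lemma FL_of_FLpm_nonneg {Γ : Set Form} {δ : Form} (h : δ ∈ FLpm Γ)
    (hn : ∀ ε, δ ≠ Form.neg ε) : FL Γ δ := by
  rcases h with h | ⟨ε, _, rfl⟩
  · exact h
  · exact absurd rfl (hn ε)

lemma flipF_mem {Γ : Set Form} {δ : Form} (h : δ ∈ FLpm Γ) : flipF δ ∈ FLpm Γ := by
  cases δ with
  | neg ε =>
    have hε : FL Γ ε := by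
      rcases h with h | ⟨ε', hε', heq⟩
      · exact FL.neg h
      · injection heq with h'; exact h' ▸ hε'
    exact Or.inl hε
  | atom a => exact Or.inr ⟨_, FL_of_FLpm_nonneg h (by intro ε h; cases h), rfl⟩
  | bot => exact Or.inr ⟨_, FL_of_FLpm_nonneg h (by intro ε h; cases h), rfl⟩
  | or A B => exact Or.inr ⟨_, FL_of_FLpm_nonneg h (by intro ε h; cases h), rfl⟩
  | dia π A => exact Or.inr ⟨_, FL_of_FLpm_nonneg h (by intro ε h; cases h), rfl⟩
  | nec A => exact Or.inr ⟨_, FL_of_FLpm_nonneg h (by intro ε h; cases h), rfl⟩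

lemma prov_flipF_neg (δ : Form) : PDLBoxProv ((flipF δ).impl δ.neg) := by
  cases δ with
  | neg ε =>
    refine PDLBoxProv.taut ?_
    intro v
    cases hε : beval v ε <;> simp [flipF, Form.impl, beval, hε]
  | atom a =>
    refine PDLBoxProv.taut ?_
    intro v; cases hA : beval v (Form.atom a) <;> simp [flipF, Form.impl, beval, hA]
  | bot =>
    refine PDLBoxProv.taut ?_
    intro v; simp [flipF, Form.impl, beval]
  | or A B =>
    refine PDLBoxProv.taut ?_
    intro v; cases hA : beval v A <;> cases hB : beval v B <;>
      simp [flipF, Form.impl, beval, hA, hB]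
  | dia π A =>
    refine PDLBoxProv.taut ?_
    intro v; cases hA : beval v (Form.dia π A) <;> simp [flipF, Form.impl, beval, hA]
  | nec A =>
    refine PDLBoxProv.taut ?_
    intro v; cases hA : beval v (Form.nec A) <;> simp [flipF, Form.impl, beval, hA]

lemma prov_or_flipF (δ : Form) : PDLBoxProv (δ.or (flipF δ)) := by
  cases δ with
  | neg ε =>
    refine PDLBoxProv.taut ?_
    intro v; cases hε : beval v ε <;> simp [flipF, Form.or, beval, hε]
  | atom a =>
    refine PDLBoxProv.taut ?_
    intro v; cases hA : beval v (Form.atom a) <;> simp [flipF, beval, hA]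
  | bot =>
    refine PDLBoxProv.taut ?_
    intro v; simp [flipF, beval]
  | or A B =>
    refine PDLBoxProv.taut ?_
    intro v; cases hA : beval v A <;> cases hB : beval v B <;>
      simp [flipF, beval, hA, hB]
  | dia π A =>
    refine PDLBoxProv.taut ?_
    intro v; cases hA : beval v (Form.dia π A) <;> simp [flipF, beval, hA]
  | nec A =>
    refine PDLBoxProv.taut ?_
    intro v; cases hA : beval v (Form.nec A) <;> simp [flipF, beval, hA]

end Stmt5Aux
section Stmt5Main

lemma prov_id {A : Form} : PDLBoxProv (A.impl A) := by
  refine PDLBoxProv.taut ?_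
  intro v; cases hA : beval v A <;> simp [Form.impl, beval, hA]

lemma prov_dneg_intro {A : Form} : PDLBoxProv (A.impl A.neg.neg) := by
  refine PDLBoxProv.taut ?_
  intro v; cases hA : beval v A <;> simp [Form.impl, beval, hA]

lemma prov_dneg_elim {A : Form} : PDLBoxProv (A.neg.neg.impl A) := by
  refine PDLBoxProv.taut ?_
  intro v; cases hA : beval v A <;> simp [Form.impl, beval, hA]

lemma prov_case_split {C δ f : Form} (h : PDLBoxProv (δ.or f)) :
    PDLBoxProv (C.impl ((C.and δ).or (C.and f))) := by
  refine (PDLBoxProv.taut ?_).mp h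
  intro v
  cases hC : beval v C <;> cases hδ : beval v δ <;> cases hf : beval v f <;>
    simp [Form.impl, Form.and, beval, hC, hδ, hf]

lemma prov_or_mono {A B C D : Form} (h1 : PDLBoxProv (A.impl C)) (h2 : PDLBoxProv (B.impl D)) :
    PDLBoxProv ((A.or B).impl (C.or D)) := by
  refine prov_mp2 (PDLBoxProv.taut ?_) h1 h2
  intro v
  cases hA : beval v A <;> cases hB : beval v B <;> cases hC : beval v C <;>
    cases hD : beval v D <;> simp [Form.impl, beval, hA, hB, hC, hD]

lemma prov_and_or_bot {X A B C : Form} (h : PDLBoxProv (A.impl (B.or C)))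
    (h1 : PDLBoxProv ((X.and B).impl Form.bot)) (h2 : PDLBoxProv ((X.and C).impl Form.bot)) :
    PDLBoxProv ((X.and A).impl Form.bot) := by
  refine prov_mp2 ((PDLBoxProv.taut ?_).mp h) h1 h2
  intro v
  cases hX : beval v X <;> cases hA : beval v A <;> cases hB : beval v B <;>
    cases hC : beval v C <;> simp [Form.impl, Form.and, beval, hX, hA, hB, hC]

lemma FLpm_finite {Γ : Set Form} (W : CanState Γ) : (FLpm Γ).Finite := by
  obtain ⟨hsub, hcons, hmax⟩ := W.2
  have hdec : ∀ δ : Form, FL Γ δ → δ ∈ W.1 ∨ Form.neg δ ∈ W.1 := by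
    intro δ hδ
    by_contra hc
    push_neg at hc
    obtain ⟨hd1, hd2⟩ := hc
    have hp1 : PDLBoxProv ((conj W.1).impl δ.neg) :=
      prov_refute_of_insert (hmax δ (Or.inl hδ) hd1)
    have hp2 : PDLBoxProv ((conj W.1).impl δ.neg.neg) :=
      prov_refute_of_insert (hmax δ.neg (Or.inr ⟨δ, hδ, rfl⟩) hd2)
    exact hcons (prov_bot_of_contr hp1 hp2)
  have hFL : {δ | FL Γ δ}.Finite := by
    refine (W.1.finite_toSet.union (W.1.finite_toSet.preimage (f := Form.neg) ?_)).subset ?_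
    · intro a _ b _ h; injection h
    · intro δ hδ
      rcases hdec δ hδ with h | h
      · exact Or.inl h
      · exact Or.inr h
  exact hFL.union ((hFL.image Form.neg).subset (by rintro γ ⟨δ, hδ, rfl⟩; exact ⟨δ, hδ, rfl⟩))

lemma extend_list {Γ : Set Form} (X C0 : Form) :
    ∀ l : List Form, (∀ δ ∈ l, δ ∈ FLpm Γ) →
    ∀ V : Finset Form, ↑V ⊆ FLpm Γ →
      Consistent (X.and (Form.diam (C0.and (conj V)))) →
      ∃ V' : Finset Form, V ⊆ V' ∧ ↑V' ⊆ FLpm Γ ∧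
        Consistent (X.and (Form.diam (C0.and (conj V')))) ∧
        ∀ δ ∈ l, δ ∈ V' ∨ flipF δ ∈ V' := by
  intro l
  induction l with
  | nil => intro _ V hV hc; exact ⟨V, Finset.Subset.refl _, hV, hc, by simp⟩
  | cons δ l ih =>
    intro hl V hV hc
    have hδpm : δ ∈ FLpm Γ := hl δ (by simp)
    have key : Consistent (X.and (Form.diam (C0.and (conj (insert δ V))))) ∨
        Consistent (X.and (Form.diam (C0.and (conj (insert (flipF δ) V))))) := by
      by_contra hcon
      push_neg at hcon
      obtain ⟨hn1, hn2⟩ := hcon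
      apply hc
      set C := C0.and (conj V) with hC
      have haa : ∀ ε : Form, PDLBoxProv ((C.and ε).impl (C0.and (conj (insert ε V)))) := by
        intro ε
        refine prov_and_intro (prov_trans prov_and_left prov_and_left) (prov_impl_conj ?_)
        intro ε' hε'
        rcases Finset.mem_insert.mp hε' with rfl | hε'
        · exact prov_and_right
        · exact prov_trans prov_and_left (prov_trans prov_and_right (prov_conj_mem hε'))
      have hsplit : PDLBoxProv (C.impl ((C.and δ).or (C.and (flipF δ)))) :=
        prov_case_split (prov_or_flipF δ)
      have hCDE : PDLBoxProv (C.impl ((C0.and (conj (insert δ V))).or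
          (C0.and (conj (insert (flipF δ) V))))) :=
        prov_trans hsplit (prov_or_mono (haa δ) (haa (flipF δ)))
      have hdia : PDLBoxProv ((Form.diam C).impl
          ((Form.diam (C0.and (conj (insert δ V)))).or
            (Form.diam (C0.and (conj (insert (flipF δ) V)))))) :=
        prov_diam_or hCDE
      exact prov_and_or_bot hdia (not_not.mp hn1) (not_not.mp hn2)
    rcases key with hk | hk
    · obtain ⟨V', hVV', hV'pm, hc', hdecV'⟩ := ih (fun ε hε => hl ε (by simp [hε]))
        (insert δ V) (by
          intro ε hε
          rcases Finset.mem_coe.mp hε  with hε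
          rcases Finset.mem_insert.mp hε with rfl | hε
          · exact hδpm
          · exact hV hε) hk
      refine ⟨V', fun ε hε => hVV' (Finset.mem_insert_of_mem hε), hV'pm, hc', ?_⟩
      intro ε hε
      rcases List.mem_cons.mp hε with rfl | hε
      · exact Or.inl (hVV' (Finset.mem_insert_self _ _))
      · exact hdecV' ε hε
    · obtain ⟨V', hVV', hV'pm, hc', hdecV'⟩ := ih (fun ε hε => hl ε (by simp [hε]))
        (insert (flipF δ) V) (by
          intro ε hε
          rcases Finset.mem_coe.mp hε  with hε
          rcases Finset.mem_insert.mp hε with rfl | hε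
          · exact flipF_mem hδpm
          · exact hV hε) hk
      refine ⟨V', fun ε hε => hVV' (Finset.mem_insert_of_mem hε), hV'pm, hc', ?_⟩
      intro ε hε
      rcases List.mem_cons.mp hε with rfl | hε
      · exact Or.inr (hVV' (Finset.mem_insert_self _ _))
      · exact hdecV' ε hε

lemma conj_empty : conj (∅ : Finset Form) = Form.top := by
  simp [conj]

lemma exists_state {Γ : Set Form} (W : CanState Γ) (X C0 : Form)
    (hX : Consistent (X.and (Form.diam (C0.and (conj (∅ : Finset Form)))))) :
    ∃ V' : Finset Form, V' ∈ SStates Γ ∧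
      Consistent (X.and (Form.diam (C0.and (conj V')))) := by
  classical
  have hfin := FLpm_finite W
  set l := hfin.toFinset.toList with hldef
  have hl : ∀ δ ∈ l, δ ∈ FLpm Γ := by
    intro δ hδ
    exact hfin.mem_toFinset.mp (by simpa [hldef] using Finset.mem_toList.mp hδ)
  obtain ⟨V', _, hV'pm, hc', hdecV'⟩ :=
    extend_list X C0 l hl ∅ (by simp) hX
  have hcover : ∀ δ ∈ FLpm Γ, δ ∈ V' ∨ flipF δ ∈ V' := by
    intro δ hδ
    exact hdecV' δ (Finset.mem_toList.mpr (hfin.mem_toFinset.mpr hδ))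
  have hconsV' : Consistent (conj V') := by
    intro hb
    apply hc'
    exact prov_trans prov_and_right
      (prov_not_diam (prov_trans prov_and_right hb))
  refine ⟨V', ⟨hV'pm, hconsV', ?_⟩, hc'⟩
  intro δ hδ hδV'
  have hflip : flipF δ ∈ V' := (hcover δ hδ).resolve_left hδV'
  intro hcI
  apply hcI
  exact prov_bot_of_contr (prov_conj_mem (Finset.mem_insert_self _ _))
    (prov_trans (prov_conj_mem (Finset.mem_insert_of_mem hflip)) (prov_flipF_neg δ))

end Stmt5Main
/-- for W ∈ S(Γ), if □γ ∈ FL±(Γ) and □γ is consistent, then □γ ∈ W iff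
    every W' ∈ S(Γ) with W ∧ ◇W' consistent contains γ. -/
theorem stmt5 (Γ : Set Form) (γ : Form) (W : CanState Γ)
    (h1 : Form.nec γ ∈ FLpm Γ) (h2 : Consistent (Form.nec γ)) :
    Form.nec γ ∈ W.1 ↔
      ∀ W' : CanState Γ, Consistent ((conj W.1).and (Form.diam (conj W'.1))) → γ ∈ W'.1 := by
  classical
  have h1' : FL Γ (Form.nec γ) := by
    rcases h1 with h | ⟨δ, _, heq⟩
    · exact h
    · cases heq
  have hγpm : γ ∈ FLpm Γ := Or.inl (FL.nec h1')
  constructor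
  · -- forward
    intro hbox W' hcon
    by_contra hγ
    have hre : PDLBoxProv ((conj W'.1).impl γ.neg) :=
      prov_refute_of_insert (W'.2.2.2 γ hγpm hγ)
    have p1 : PDLBoxProv ((conj W.1).impl (Form.nec γ.neg.neg)) :=
      prov_trans (prov_conj_mem hbox) (prov_nec_mono prov_dneg_intro)
    have p3 : PDLBoxProv ((Form.diam (conj W'.1)).impl (Form.nec γ.neg.neg).neg) :=
      prov_diam_mono hre
    exact hcon (prov_bot_of_contr (prov_trans prov_and_left p1)
      (prov_trans prov_and_right p3))
  · -- backward
    intro h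
    by_contra hbox
    have hre : PDLBoxProv ((conj W.1).impl (Form.nec γ).neg) :=
      prov_refute_of_insert (W.2.2.2 _ h1 hbox)
    have q1 : PDLBoxProv ((Form.nec γ).neg.impl (Form.nec γ.neg.neg).neg) :=
      prov_contrapose (prov_nec_mono prov_dneg_elim)
    have q2 : PDLBoxProv ((Form.diam γ.neg).impl
        (Form.diam (γ.neg.and (conj (∅ : Finset Form))))) :=
      prov_diam_mono (prov_and_intro prov_id
        (prov_impl_conj (by intro δ hδ; simp at hδ)))
    have hc0 : Consistent ((conj W.1).and
        (Form.diam (γ.neg.and (conj (∅ : Finset Form))))) :=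
      consistent_mono
        (prov_and_intro prov_id (prov_trans hre (prov_trans q1 q2))) W.2.2.1
    obtain ⟨V', hS, hc'⟩ := exists_state W (conj W.1) γ.neg hc0
    set W' : CanState Γ := ⟨V', hS⟩ with hW'
    have hWW' : Consistent ((conj W.1).and (Form.diam (conj V'))) :=
      consistent_mono (prov_and_intro prov_and_left
        (prov_trans prov_and_right (prov_diam_mono prov_and_right))) hc'
    have hγin : γ ∈ V' := h W' hWW'
    apply hc'
    refine prov_trans prov_and_right (prov_not_diam ?_)
    exact prov_bot_of_contr (prov_trans prov_and_right (prov_conj_mem hγin))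
      prov_and_left

end PEDAL
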